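/- For every real ε > 0 there exist a real δ > 0 and an integer N such that for all integers n ≥ N and all integers t with 0 < t and t² ≤ δ·n, the single-exclusion number satisfies T(n, t+1, t) ≤ S(n,t) ≤ (1+ε)·T(n, t+1, t). (That is, S(n,t) ∼ T(n,t+1,t) as n → ∞ whenever t = o(√n).) -/

import Mathlib

/-- An `(n,t)`-single-exclusion system: a collection of `t`-subsets (blocks) of an
`n`-set such that every subset `X` with `1 ≤ |X| ≤ t+1` has a block containing all
but exactly one element of `X`. -/
def IsSESystem (n t : ℕ) (S : Finset (Finset (Fin n))) : Prop :=
  (∀ B ∈ S, B.card = t) ∧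
  ∀ X : Finset (Fin n), 1 ≤ X.card → X.card ≤ t + 1 → ∃ B ∈ S, (X \ B).card = 1

/-- The `(n,t)`-single-exclusion number `S(n,t)`: the least number of blocks in an
`(n,t)`-single-exclusion system. -/
noncomputable def SENumber (n t : ℕ) : ℕ :=
  sInf {m : ℕ | ∃ S : Finset (Finset (Fin n)), IsSESystem n t S ∧ S.card = m}
/-- An `(n,s,t)`-Turán system: a collection of `t`-subsets (blocks) of an `n`-set
such that every `s`-subset contains at least one block. -/
def IsTuranSystem (n s t : ℕ) (T : Finset (Finset (Fin n))) : Prop :=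
  (∀ B ∈ T, B.card = t) ∧
  ∀ X : Finset (Fin n), X.card = s → ∃ B ∈ T, B ⊆ X

/-- The `(n,s,t)`-Turán number `T(n,s,t)`: the least number of blocks in an
`(n,s,t)`-Turán system. -/
noncomputable def turanNumber (n s t : ℕ) : ℕ :=
  sInf {m : ℕ | ∃ T : Finset (Finset (Fin n)), IsTuranSystem n s t T ∧ T.card = m}

open Finset

/-! ### Auxiliary lemmas -/

lemma aux_turan_attained (n t : ℕ) :
    ∃ T0 : Finset (Finset (Fin n)), IsTuranSystem n (t+1) t T0 ∧
      T0.card = turanNumber n (t+1) t := by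
  have hne : {m : ℕ | ∃ T0 : Finset (Finset (Fin n)),
      IsTuranSystem n (t+1) t T0 ∧ T0.card = m}.Nonempty := by
    refine ⟨_, Finset.powersetCard t (univ : Finset (Fin n)), ⟨?_, ?_⟩, rfl⟩
    · intro B hB; exact (Finset.mem_powersetCard.1 hB).2
    · intro X hX
      obtain ⟨B, hBX, hBcard⟩ := Finset.exists_subset_card_eq (s := X) (n := t) (by omega)
      exact ⟨B, Finset.mem_powersetCard.2 ⟨subset_univ _, hBcard⟩, hBX⟩
  obtain ⟨T0, hT0, hcard⟩ := Nat.sInf_mem hne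
  exact ⟨T0, hT0, hcard⟩

/-- Counting lower bound for Turán systems. -/
lemma aux_turan_count (n t : ℕ) (T0 : Finset (Finset (Fin n)))
    (hT : IsTuranSystem n (t+1) t T0) :
    n.choose (t+1) ≤ (n - t) * T0.card := by
  classical
  set A := Finset.powersetCard (t+1) (univ : Finset (Fin n)) with hA
  have hch : ∀ X : Finset (Fin n), ∃ B, (X.card = t + 1 → B ∈ T0 ∧ B ⊆ X) := by
    intro X
    by_cases hX : X.card = t + 1
    · obtain ⟨B, h1, h2⟩ := hT.2 X hX
      exact ⟨B, fun _ => ⟨h1, h2⟩⟩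
    · exact ⟨∅, fun hc => absurd hc hX⟩
  choose f hf using hch
  have hmaps : ∀ X ∈ A, f X ∈ T0 := by
    intro X hX
    exact (hf X (Finset.mem_powersetCard.1 hX).2).1
  have hcard : A.card ≤ (n - t) * T0.card := by
    apply Finset.card_le_mul_card_image_of_maps_to hmaps
    intro B hB
    have hBcard : B.card = t := hT.1 B hB
    apply le_trans (Finset.card_le_card_of_injOn (fun X => X \ B)
      (t := Finset.powersetCard 1 Bᶜ) ?_ ?_)
    · rw [Finset.card_powersetCard, Finset.card_compl, hBcard]
      simp [Nat.choose_one_right]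
    · intro X hX
      simp only [coe_filter, Set.mem_setOf_eq] at hX
      obtain ⟨hXA, hfX⟩ := hX
      have hXcard : X.card = t + 1 := (Finset.mem_powersetCard.1 hXA).2
      have hBX : B ⊆ X := hfX ▸ (hf X hXcard).2
      rw [Finset.mem_coe, Finset.mem_powersetCard]
      constructor
      · intro y hy
        simp only [mem_sdiff] at hy
        simp [hy.2]
      · rw [Finset.card_sdiff_of_subset hBX, hXcard, hBcard]; omega
    · intro X hX Y hY hXY
      simp only [coe_filter, Set.mem_setOf_eq] at hX hY
      have hBX : B ⊆ X := hX.2 ▸ (hf X (Finset.mem_powersetCard.1 hX.1).2).2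
      have hBY : B ⊆ Y := hY.2 ▸ (hf Y (Finset.mem_powersetCard.1 hY.1).2).2
      have : (X \ B) ∪ B = (Y \ B) ∪ B := by simp only at hXY; rw [hXY]
      rwa [Finset.sdiff_union_of_subset hBX, Finset.sdiff_union_of_subset hBY] at this
  have hAcard : A.card = n.choose (t+1) := by
    rw [hA, Finset.card_powersetCard, Finset.card_univ, Fintype.card_fin]
  omega

/-- `pick2 Y` : a 2-element subset of `Yᶜ` (when it exists). -/
noncomputable def pick2 {n : ℕ} (Y : Finset (Fin n)) : Finset (Fin n) :=
  if h : 2 ≤ Yᶜ.card then (Finset.exists_subset_card_eq h).choose else ∅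

lemma pick2_subset {n : ℕ} (Y : Finset (Fin n)) : pick2 Y ⊆ Yᶜ := by
  unfold pick2
  split
  · exact (Finset.exists_subset_card_eq ‹_›).choose_spec.1
  · exact empty_subset _

lemma pick2_card_le {n : ℕ} (Y : Finset (Fin n)) : (pick2 Y).card ≤ 2 := by
  unfold pick2
  split
  · exact le_of_eq (Finset.exists_subset_card_eq ‹_›).choose_spec.2
  · simp

lemma pick2_card {n : ℕ} (Y : Finset (Fin n)) (h : 2 ≤ Yᶜ.card) : (pick2 Y).card = 2 := by
  unfold pick2
  rw [dif_pos h]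
  exact (Finset.exists_subset_card_eq h).choose_spec.2

/-- Extra blocks handling small subsets in the SE condition. -/
noncomputable def extraBlocks (n t : ℕ) : Finset (Finset (Fin n)) :=
  (Finset.powersetCard (t-1) (univ : Finset (Fin n))).biUnion
    (fun Y => (pick2 Y).image (fun x => insert x Y))

lemma extraBlocks_card (n t : ℕ) : (extraBlocks n t).card ≤ 2 * n.choose (t-1) := by
  unfold extraBlocks
  apply le_trans (Finset.card_biUnion_le)
  apply le_trans (Finset.sum_le_sum (g := fun _ => 2) ?_)
  · rw [Finset.sum_const, smul_eq_mul, Finset.card_powersetCard, Finset.card_univ,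
      Fintype.card_fin, mul_comm]
  · intro Y _
    exact le_trans (Finset.card_image_le) (pick2_card_le Y)

lemma extraBlocks_blockcard {n t : ℕ} (ht : 1 ≤ t) {B : Finset (Fin n)}
    (hB : B ∈ extraBlocks n t) : B.card = t := by
  unfold extraBlocks at hB
  simp only [Finset.mem_biUnion, Finset.mem_image] at hB
  obtain ⟨Y, hY, x, hx, rfl⟩ := hB
  have hYcard : Y.card = t - 1 := (Finset.mem_powersetCard.1 hY).2
  have hxY : x ∉ Y := by
    have := pick2_subset Y hx
    simpa using this
  rw [Finset.card_insert_of_notMem hxY, hYcard]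
  omega

lemma extraBlocks_cover {n t : ℕ} (ht : 1 ≤ t) (hn : t + 1 ≤ n)
    (X : Finset (Fin n)) (h1 : 1 ≤ X.card) (h2 : X.card ≤ t) :
    ∃ B ∈ extraBlocks n t, (X \ B).card = 1 := by
  obtain ⟨x, hx⟩ := Finset.card_pos.1 h1
  obtain ⟨Y, hXY, hYsub, hYcard⟩ := Finset.exists_subsuperset_card_eq
    (s := X.erase x) (t := (univ : Finset (Fin n)).erase x) (n := t - 1)
    (fun y hy => by
      simp only [Finset.mem_erase, Finset.mem_univ, and_true]
      exact (Finset.mem_erase.1 hy).1)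
    (by rw [Finset.card_erase_of_mem hx]; omega)
    (by rw [Finset.card_erase_of_mem (mem_univ x), Finset.card_univ, Fintype.card_fin]; omega)
  have hxY : x ∉ Y := fun hcon => (Finset.mem_erase.1 (hYsub hcon)).1 rfl
  have hYmem : Y ∈ Finset.powersetCard (t-1) (univ : Finset (Fin n)) :=
    Finset.mem_powersetCard.2 ⟨subset_univ _, hYcard⟩
  have h2card : (pick2 Y).card = 2 := by
    apply pick2_card
    rw [Finset.card_compl, Fintype.card_fin, hYcard]
    omega
  have : ∃ a ∈ pick2 Y, a ≠ x := by
    by_contra hcon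
    push_neg at hcon
    have : pick2 Y ⊆ {x} := fun a ha => Finset.mem_singleton.2 (hcon a ha)
    have := Finset.card_le_card this
    simp [h2card] at this
  obtain ⟨a, ha, hax⟩ := this
  refine ⟨insert a Y, ?_, ?_⟩
  · unfold extraBlocks
    rw [Finset.mem_biUnion]
    exact ⟨Y, hYmem, Finset.mem_image_of_mem _ ha⟩
  · have hXB : X \ insert a Y = {x} := by
      ext y
      simp only [Finset.mem_sdiff, Finset.mem_insert, Finset.mem_singleton]
      constructor
      · rintro ⟨hyX, hyB⟩
        push_neg at hyB
        by_contra hyx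
        have : y ∈ Y := hXY (Finset.mem_erase.2 ⟨hyx, hyX⟩)
        exact hyB.2 this
      · rintro rfl
        exact ⟨hx, by push_neg; exact ⟨fun h => hax h.symm, hxY⟩⟩
    rw [hXB, Finset.card_singleton]

/-- Construction of an SE system from a minimal Turán system plus extra blocks. -/
lemma aux_se_construct (n t : ℕ) (ht : 1 ≤ t) (hn : t + 1 ≤ n) :
    ∃ S : Finset (Finset (Fin n)), IsSESystem n t S ∧
      S.card ≤ turanNumber n (t+1) t + 2 * n.choose (t-1) := by
  obtain ⟨T0, hT0, hT0card⟩ := aux_turan_attained n t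
  refine ⟨T0 ∪ extraBlocks n t, ⟨?_, ?_⟩, ?_⟩
  · intro B hB
    rcases Finset.mem_union.1 hB with h | h
    · exact hT0.1 B h
    · exact extraBlocks_blockcard ht h
  · intro X h1 h2
    by_cases hX : X.card = t + 1
    · obtain ⟨B, hB, hBX⟩ := hT0.2 X hX
      refine ⟨B, Finset.mem_union_left _ hB, ?_⟩
      rw [Finset.card_sdiff_of_subset hBX, hX, hT0.1 B hB]; omega
    · obtain ⟨B, hB, hcard⟩ := extraBlocks_cover ht hn X h1 (by omega)
      exact ⟨B, Finset.mem_union_right _ hB, hcard⟩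
  · calc (T0 ∪ extraBlocks n t).card ≤ T0.card + (extraBlocks n t).card :=
        Finset.card_union_le _ _
      _ ≤ turanNumber n (t+1) t + 2 * n.choose (t-1) := by
        rw [hT0card]
        exact Nat.add_le_add_left (extraBlocks_card n t) _

theorem stmt16 (ε : ℝ) (hε : 0 < ε) :
    ∃ δ : ℝ, 0 < δ ∧ ∃ N : ℕ, ∀ n : ℕ, N ≤ n → ∀ t : ℕ, 0 < t →
      (t : ℝ) ^ 2 ≤ δ * n →
      turanNumber n (t + 1) t ≤ SENumber n t ∧
      (SENumber n t : ℝ) ≤ (1 + ε) * (turanNumber n (t + 1) t : ℝ) := by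
  refine ⟨min (ε/8) 1, lt_min (by linarith) one_pos, 4, ?_⟩
  intro n hn t ht hδt
  have hδ1 : min (ε/8) 1 ≤ 1 := min_le_right _ _
  have hδε : min (ε/8) 1 ≤ ε/8 := min_le_left _ _
  have hn4 : (4:ℝ) ≤ n := by exact_mod_cast hn
  have htR : (1:ℝ) ≤ t := by exact_mod_cast ht
  have hδn : min (ε/8) 1 * n ≤ n := by nlinarith
  -- 2t ≤ n
  have h2t : 2 * (t:ℝ) ≤ n := by nlinarith [hδt, hδn]
  have h2tN : 2 * t ≤ n := by exact_mod_cast h2t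
  have htn : t + 1 ≤ n := by omega
  -- upper bound construction
  obtain ⟨S, hS, hScard⟩ := aux_se_construct n t ht htn
  have hSE_le : SENumber n t ≤ turanNumber n (t+1) t + 2 * n.choose (t-1) := by
    refine le_trans (Nat.sInf_le ⟨S, hS, rfl⟩) hScard
  -- lower bound: a minimal SE system is a Turán system
  have hlow : turanNumber n (t+1) t ≤ SENumber n t := by
    have hne : {m : ℕ | ∃ S : Finset (Finset (Fin n)),
        IsSESystem n t S ∧ S.card = m}.Nonempty := ⟨S.card, S, hS, rfl⟩
    obtain ⟨S', hS', hS'card⟩ := Nat.sInf_mem hne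
    refine le_trans (Nat.sInf_le ⟨S', ⟨hS'.1, ?_⟩, rfl⟩) (le_of_eq hS'card)
    intro X hX
    obtain ⟨B, hB, hBX⟩ := hS'.2 X (by omega) (by omega)
    refine ⟨B, hB, ?_⟩
    have hBcard : B.card = t := hS'.1 B hB
    have hinter : (X ∩ B).card + (X \ B).card = X.card :=
      Finset.card_inter_add_card_sdiff X B
    have : X ∩ B = B := by
      apply Finset.eq_of_subset_of_card_le (Finset.inter_subset_right)
      omega
    rw [← this]
    exact Finset.inter_subset_left
  refine ⟨hlow, ?_⟩
  -- Turán counting lower bound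
  obtain ⟨T0, hT0, hT0card⟩ := aux_turan_attained n t
  have hcount : n.choose (t+1) ≤ (n - t) * turanNumber n (t+1) t := by
    rw [← hT0card]; exact aux_turan_count n t T0 hT0
  have hid1 : n.choose (t+1) * (t+1) = n.choose t * (n - t) :=
    Nat.choose_succ_right_eq n t
  have hTlb : n.choose t ≤ (t+1) * turanNumber n (t+1) t := by
    have hnt : 0 < n - t := by omega
    have : n.choose t * (n - t) ≤ ((t+1) * turanNumber n (t+1) t) * (n - t) := by
      calc n.choose t * (n - t) = n.choose (t+1) * (t+1) := hid1.symm
        _ ≤ ((n - t) * turanNumber n (t+1) t) * (t+1) :=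
            Nat.mul_le_mul_right _ hcount
        _ = ((t+1) * turanNumber n (t+1) t) * (n - t) := by ring
    exact Nat.le_of_mul_le_mul_right this hnt
  -- binomial identity at level t-1
  have hid2 : n.choose t * t = n.choose (t-1) * (n - (t-1)) := by
    have := Nat.choose_succ_right_eq n (t-1)
    have h1 : t - 1 + 1 = t := by omega
    rwa [h1] at this
  -- move to the reals
  have hcast1 : ((n - (t-1) : ℕ) : ℝ) = (n:ℝ) - t + 1 := by
    have : n - (t-1) = n - t + 1 := by omega
    rw [this]
    push_cast [Nat.cast_sub (le_of_lt (by omega : t < n))]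
    ring
  have hC : (n.choose t : ℝ) * t = (n.choose (t-1) : ℝ) * ((n:ℝ) - t + 1) := by
    rw [← hcast1]
    exact_mod_cast hid2
  have hT : (n.choose t : ℝ) ≤ ((t:ℝ)+1) * (turanNumber n (t+1) t : ℝ) := by
    exact_mod_cast hTlb
  have hkey : 2 * (t:ℝ) * ((t:ℝ)+1) ≤ ε * ((n:ℝ) - t + 1) := by
    nlinarith [hδt, hδε, h2t, hε.le, hn4]
  have hTnn : (0:ℝ) ≤ (turanNumber n (t+1) t : ℝ) := Nat.cast_nonneg _
  have hnt1 : (0:ℝ) < (n:ℝ) - t + 1 := by nlinarith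
  have hD : 2 * (n.choose (t-1) : ℝ) ≤ ε * (turanNumber n (t+1) t : ℝ) := by
    set C := (n.choose t : ℝ) with hCdef
    set D := (n.choose (t-1) : ℝ) with hDdef
    set T := (turanNumber n (t+1) t : ℝ) with hTdef
    set M := (n:ℝ) - t + 1 with hMdef
    have htnn : (0:ℝ) ≤ (t:ℝ) := Nat.cast_nonneg _
    have h1 : 2 * D * M ≤ ε * T * M := by
      calc 2 * D * M = 2 * (C * (t:ℝ)) := by rw [hC]; ring
        _ ≤ 2 * ((((t:ℝ)+1) * T) * (t:ℝ)) := by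
            have := mul_le_mul_of_nonneg_right hT htnn
            linarith
        _ = (2 * (t:ℝ) * ((t:ℝ)+1)) * T := by ring
        _ ≤ (ε * M) * T := mul_le_mul_of_nonneg_right hkey hTnn
        _ = ε * T * M := by ring
    exact le_of_mul_le_mul_right h1 hnt1
  have hcast2 : (SENumber n t : ℝ) ≤ (turanNumber n (t+1) t : ℝ)
      + 2 * (n.choose (t-1) : ℝ) := by exact_mod_cast hSE_le
  linarith
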